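/- Let m ≥ n ≥ 2. The set of matrices A ∈ ℝ^{n×m} for which H_A = ∪_{d≥1} H_A^d is not in general position is of the first category in the sense of Baire (i.e., meagre) in ℝ^{n×m}. -/

import Mathlib

/-- The Hadamard product of the columns of `A` selected by the multiset `ℓ`. -/
noncomputable def hadamardColProd {n m : ℕ} (A : Matrix (Fin n) (Fin m) ℝ)
    (ℓ : Multiset (Fin m)) : Fin n → ℝ :=
  (ℓ.map fun k => fun i => A i k).prod

/-- `H_A`: the set of all Hadamard products of a nonempty multiset of columns of `A`,
i.e. `∪_{d ≥ 1} H_A^d`. -/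
noncomputable def hadamardColSetAll {n m : ℕ} (A : Matrix (Fin n) (Fin m) ℝ) :
    Set (Fin n → ℝ) :=
  {v | ∃ ℓ : Multiset (Fin m), ℓ ≠ 0 ∧ v = hadamardColProd A ℓ}

/-- A set `S ⊆ ℝ^n` is in general position if every subset of at most `n` elements is
linearly independent. -/
def InGeneralPosition {n : ℕ} (S : Set (Fin n → ℝ)) : Prop :=
  ∀ T : Finset (Fin n → ℝ), ↑T ⊆ S → T.card ≤ n →
    LinearIndependent ℝ (fun v : T => (v : Fin n → ℝ))

lemma hadamardColProd_apply {n m : ℕ} (A : Matrix (Fin n) (Fin m) ℝ)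
    (ℓ : Multiset (Fin m)) (i : Fin n) :
    hadamardColProd A ℓ i = (ℓ.map fun k => A i k).prod := by
  have h := map_multiset_prod (Pi.evalMonoidHom (fun _ : Fin n => ℝ) i)
      (ℓ.map fun k => fun i => A i k)
  simpa [hadamardColProd, Multiset.map_map, Function.comp] using h

lemma continuous_multisetProd {X α : Type*} [TopologicalSpace X] (s : Multiset α)
    (f : α → X → ℝ) (hf : ∀ a, Continuous (f a)) :
    Continuous fun x => (s.map fun a => f a x).prod := by
  induction s using Multiset.induction with
  | empty => simpa using continuous_const
  | cons a s ih =>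
    simp only [Multiset.map_cons, Multiset.prod_cons]
    exact (hf a).mul ih

lemma multiset_prime_prod_injective {α : Type*} (P : α → ℕ) (hP : Function.Injective P)
    (hprime : ∀ a, Nat.Prime (P a)) :
    Function.Injective fun s : Multiset α => (s.map P).prod := by
  intro s t h
  have hs : ∀ x ∈ s.map P, Irreducible x := by
    intro x hx; obtain ⟨a, -, rfl⟩ := Multiset.mem_map.mp hx; exact hprime a
  have ht : ∀ x ∈ t.map P, Irreducible x := by
    intro x hx; obtain ⟨a, -, rfl⟩ := Multiset.mem_map.mp hx; exact hprime a
  have h' : (s.map P).prod = (t.map P).prod := h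
  have hrel := UniqueFactorizationMonoid.factors_unique hs ht (h' ▸ Associated.refl _)
  have heq : s.map P = t.map P :=
    Multiset.rel_eq.mp (hrel.mono fun a _ b _ hab => associated_iff_eq.mp hab)
  exact Multiset.map_injective hP heq

lemma isMeagre_badF {n m : ℕ} (F : Finset (Multiset (Fin m))) :
    IsMeagre {A : Matrix (Fin n) (Fin m) ℝ | F.card ≤ n ∧
      ¬ LinearIndependent ℝ (fun ℓ : F => hadamardColProd A (ℓ : Multiset (Fin m)))} := by
  classical
  by_cases hcard : F.card ≤ n
  swap
  · exact IsMeagre.empty.mono fun A hA => absurd hA.1 hcard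
  set e : Fin F.card → Multiset (Fin m) := fun i => (F.equivFin.symm i : Multiset (Fin m))
    with he
  have he_inj : Function.Injective e := fun i j h =>
    F.equivFin.symm.injective (Subtype.val_injective h)
  set ρ : Fin F.card → Fin n := Fin.castLE hcard with hρ
  set Mt : Matrix (Fin n) (Fin m) ℝ → Matrix (Fin F.card) (Fin F.card) ℝ :=
    fun A => Matrix.of fun i j => hadamardColProd A (e i) (ρ j) with hMt
  set Z : Set (Matrix (Fin n) (Fin m) ℝ) := {A | (Mt A).det = 0} with hZ
  -- closedness
  have hcont : Continuous fun A : Matrix (Fin n) (Fin m) ℝ => (Mt A).det := by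
    apply Continuous.matrix_det
    apply continuous_matrix
    intro i j
    have hrw : (fun A : Matrix (Fin n) (Fin m) ℝ => Mt A i j)
        = fun A => ((e i).map fun l => A (ρ j) l).prod := by
      funext A
      simp only [hMt, Matrix.of_apply]
      exact hadamardColProd_apply A (e i) (ρ j)
    rw [hrw]
    exact continuous_multisetProd _ _ fun l => (continuous_apply l).comp (continuous_apply (ρ j))
  have hZclosed : IsClosed Z := isClosed_eq hcont continuous_const
  -- good matrix
  set A₁ : Matrix (Fin n) (Fin m) ℝ :=
    Matrix.of fun i l => ((Nat.nth Nat.Prime (l : ℕ) : ℕ) : ℝ) ^ (i : ℕ) with hA₁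
  set r : Fin F.card → ℝ :=
    fun i => ((e i).map fun l : Fin m => ((Nat.nth Nat.Prime (l : ℕ) : ℕ) : ℝ)).prod with hr
  have hrcast : ∀ i, r i = ((((e i).map fun l : Fin m => Nat.nth Nat.Prime (l : ℕ)).prod : ℕ) : ℝ) := by
    intro i
    rw [hr, Nat.cast_multiset_prod, Multiset.map_map]
    rfl
  have hMtA₁ : Mt A₁ = Matrix.vandermonde r := by
    ext i j
    simp only [hMt, Matrix.of_apply, Matrix.vandermonde_apply]
    rw [hadamardColProd_apply]
    have hentry : ∀ l : Fin m, A₁ (ρ j) l = ((Nat.nth Nat.Prime (l : ℕ) : ℕ) : ℝ) ^ (j : ℕ) := by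
      intro l
      simp [hA₁, hρ, Fin.coe_castLE]
    calc ((e i).map fun l => A₁ (ρ j) l).prod
        = ((e i).map fun l : Fin m => ((Nat.nth Nat.Prime (l : ℕ) : ℕ) : ℝ) ^ (j : ℕ)).prod := by
          exact congrArg Multiset.prod (Multiset.map_congr rfl fun l _ => hentry l)
      _ = ((e i).map fun l : Fin m => ((Nat.nth Nat.Prime (l : ℕ) : ℕ) : ℝ)).prod ^ (j : ℕ) :=
          Multiset.prod_map_pow
      _ = r i ^ (j : ℕ) := rfl
  have hrinj : Function.Injective r := by
    intro i j hij
    rw [hrcast i, hrcast j] at hij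
    have hnat : ((e i).map fun l : Fin m => Nat.nth Nat.Prime (l : ℕ)).prod
        = ((e j).map fun l : Fin m => Nat.nth Nat.Prime (l : ℕ)).prod := Nat.cast_injective hij
    have heq : e i = e j :=
      multiset_prime_prod_injective (fun l : Fin m => Nat.nth Nat.Prime (l : ℕ))
        ((Nat.nth_injective Nat.infinite_setOf_prime).comp Fin.val_injective)
        (fun l => Nat.prime_nth_prime (l : ℕ)) hnat
    exact he_inj heq
  have hdet₁ : (Mt A₁).det ≠ 0 := by
    rw [hMtA₁]
    exact Matrix.det_vandermonde_ne_zero_iff.mpr hrinj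
  -- density of the complement
  have hdense : Dense Zᶜ := by
    rw [dense_iff_inter_open]
    intro U hU hUne
    obtain ⟨A₀, hA₀⟩ := hUne
    set L : ℝ → Matrix (Fin n) (Fin m) ℝ := fun t => A₀ + t • (A₁ - A₀) with hL
    have hLcont : Continuous L := by
      apply continuous_const.add
      exact continuous_id.smul continuous_const
    have hL0 : L 0 = A₀ := by simp [hL]
    have hL1 : L 1 = A₁ := by simp [hL]
    set N : Matrix (Fin F.card) (Fin F.card) (Polynomial ℝ) := Matrix.of fun i j =>
      ((e i).map fun l => Polynomial.C (A₀ (ρ j) l)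
        + Polynomial.X * Polynomial.C ((A₁ - A₀) (ρ j) l)).prod with hN
    set q : Polynomial ℝ := N.det with hq
    have heval : ∀ t : ℝ, q.eval t = (Mt (L t)).det := by
      intro t
      have h1 := RingHom.map_det (Polynomial.evalRingHom t) N
      have h2 : N.map (Polynomial.evalRingHom t) = Mt (L t) := by
        ext i j
        simp only [Matrix.map_apply, hN, Matrix.of_apply, hMt]
        rw [map_multiset_prod, Multiset.map_map, hadamardColProd_apply]
        apply congrArg Multiset.prod
        apply Multiset.map_congr rfl
        intro l _
        simp [hL, Matrix.add_apply, Matrix.smul_apply, Matrix.sub_apply, smul_eq_mul]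
      calc q.eval t = (Polynomial.evalRingHom t) N.det := rfl
        _ = (N.map (Polynomial.evalRingHom t)).det := h1
        _ = (Mt (L t)).det := by rw [h2]
    have hq0 : q ≠ 0 := by
      intro h
      apply hdet₁
      rw [← hL1, ← heval 1, h, Polynomial.eval_zero]
    have hroots : {t : ℝ | q.IsRoot t}.Finite := Polynomial.finite_setOf_isRoot hq0
    have hdr : Dense {t : ℝ | q.IsRoot t}ᶜ := hroots.countable.dense_compl ℝ
    have hopen : IsOpen (L ⁻¹' U) := hU.preimage hLcont
    have hne : (L ⁻¹' U).Nonempty := ⟨0, by simpa [hL0] using hA₀⟩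
    obtain ⟨t, ht, htU⟩ := hdr.exists_mem_open hopen hne
    refine ⟨L t, htU, ?_⟩
    simp only [hZ, Set.mem_compl_iff, Set.mem_setOf_eq]
    rw [← heval t]
    exact ht
  have hZmeagre : IsMeagre Z := residual_of_dense_open hZclosed.isOpen_compl hdense
  apply hZmeagre.mono
  intro A hA
  obtain ⟨-, hdep⟩ := hA
  by_contra hAZ
  have hne0 : (Mt A).det ≠ 0 := hAZ
  have hrows : LinearIndependent ℝ (fun i => Mt A i) :=
    Matrix.linearIndependent_rows_iff_isUnit.mpr
      ((Matrix.isUnit_iff_isUnit_det _).mpr (isUnit_iff_ne_zero.mpr hne0))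
  have hcomp : (⇑(LinearMap.funLeft ℝ ℝ ρ)) ∘ (fun i => hadamardColProd A (e i))
      = fun i => Mt A i := by
    funext i
    funext j
    simp [LinearMap.funLeft_apply, hMt]
  have hv' : LinearIndependent ℝ (fun i => hadamardColProd A (e i)) :=
    LinearIndependent.of_comp (LinearMap.funLeft ℝ ℝ ρ) (hcomp ▸ hrows)
  apply hdep
  rw [← linearIndependent_equiv F.equivFin.symm]
  exact hv'

/-- For `m ≥ n ≥ 2`, the set of matrices `A ∈ ℝ^{n×m}` for which
`H_A = ∪_{d≥1} H_A^d` is not in general position is meagre (of the first category in the sense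
of Baire) in `ℝ^{n×m}`. -/
theorem isMeagre_not_general_position (n m : ℕ) (hn : 2 ≤ n) (hnm : n ≤ m) :
    IsMeagre {A : Matrix (Fin n) (Fin m) ℝ | ¬ InGeneralPosition (hadamardColSetAll A)} := by
  classical
  set bad : Finset (Multiset (Fin m)) → Set (Matrix (Fin n) (Fin m) ℝ) := fun F =>
    {A | F.card ≤ n ∧
      ¬ LinearIndependent ℝ (fun ℓ : F => hadamardColProd A (ℓ : Multiset (Fin m)))} with hbad
  have hsub : {A : Matrix (Fin n) (Fin m) ℝ | ¬ InGeneralPosition (hadamardColSetAll A)}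
      ⊆ ⋃ F, bad F := by
    intro A hA
    simp only [Set.mem_setOf_eq, InGeneralPosition] at hA
    push_neg at hA
    obtain ⟨T, hTS, hTn, hTdep⟩ := hA
    choose g hg0 hgv using fun v : T => hTS (Finset.mem_coe.mpr v.2)
    set F : Finset (Multiset (Fin m)) := T.attach.image g with hF
    refine Set.mem_iUnion.mpr ⟨F, ?_, ?_⟩
    · calc F.card ≤ T.attach.card := Finset.card_image_le
        _ = T.card := Finset.card_attach
        _ ≤ n := hTn
    · intro hind
      set φ : T → F := fun v =>
        ⟨g v, Finset.mem_image_of_mem g (Finset.mem_attach T v)⟩ with hφ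
      have hφinj : Function.Injective φ := by
        intro v w hvw
        apply Subtype.ext
        have hgvw : g v = g w := congrArg Subtype.val hvw
        have h1 := hgv v
        have h2 := hgv w
        rw [h1, h2, hgvw]
      have hcomp := hind.comp φ hφinj
      have heq : ((fun ℓ : F => hadamardColProd A (ℓ : Multiset (Fin m))) ∘ φ)
          = fun v : T => (v : Fin n → ℝ) := by
        funext v
        exact (hgv v).symm
      rw [heq] at hcomp
      exact hTdep hcomp
  obtain ⟨f, hf⟩ := exists_surjective_nat (Finset (Multiset (Fin m)))
  have hunion : (⋃ F, bad F) = ⋃ k : ℕ, bad (f k) := (hf.iUnion_comp bad).symm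
  refine IsMeagre.mono hsub ?_
  rw [hunion]
  exact isMeagre_iUnion fun k => isMeagre_badF (f k)
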